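/- Let c : ℕ × ℕ → ℂ be a phase matrix, let a : ℕ → ℂ be finitely supported with ∑_n |a_n|² = 1, and let X ⊆ [0,2π) be a Borel set whose Lebesgue measure is strictly less than 2π. Then (2π)^{-1} ∫_X ∑_{n,m} c_{n,m} e^{i(n−m)θ} conj(a_n) a_m dθ < 1. -/

import Mathlib

open MeasureTheory Real Set
open scoped ComplexConjugate ComplexOrder

/-- A phase matrix: a positive semidefinite matrix `c : ℕ × ℕ → ℂ` with unit diagonal. -/
def IsPhaseMatrix (c : ℕ → ℕ → ℂ) : Prop :=
  (∀ a : ℕ →₀ ℂ, 0 ≤ a.sum fun n an => a.sum fun m am => conj an * c n m * am) ∧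
  (∀ n : ℕ, c n n = 1)

/-- The phase probability density `θ ↦ ∑_{n,m} c_{n,m} e^{i(n-m)θ} conj(a_n) a_m`
associated with a matrix `c : ℕ × ℕ → ℂ` and a finitely supported sequence `a`. -/
noncomputable def phaseDensity (c : ℕ → ℕ → ℂ) (a : ℕ →₀ ℂ) (θ : ℝ) : ℂ :=
  a.sum fun n an => a.sum fun m am =>
    c n m * Complex.exp (Complex.I * ((n : ℂ) - (m : ℂ)) * (θ : ℂ)) * conj an * am

lemma phaseDensity_eq_sum (c : ℕ → ℕ → ℂ) (a : ℕ →₀ ℂ) (θ : ℝ) :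
    phaseDensity c a θ = ∑ n ∈ a.support, ∑ m ∈ a.support,
      c n m * Complex.exp (Complex.I * ((n : ℂ) - (m : ℂ)) * (θ : ℂ)) * conj (a n) * a m :=
  rfl

/-- Positivity of the phase density, from positive semidefiniteness of `c`. -/
lemma phaseDensity_nonneg (c : ℕ → ℕ → ℂ) (hc : IsPhaseMatrix c) (a : ℕ →₀ ℂ) (θ : ℝ) :
    0 ≤ phaseDensity c a θ := by
  classical
  set b : ℕ →₀ ℂ := Finsupp.onFinset a.support
    (fun n => Complex.exp (-(Complex.I * (n : ℂ) * (θ : ℂ))) * a n)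
    (fun n h => by
      rw [mul_ne_zero_iff] at h
      exact Finsupp.mem_support_iff.2 h.2) with hb
  have hbval : ∀ n, b n = Complex.exp (-(Complex.I * (n : ℂ) * (θ : ℂ))) * a n := fun n => rfl
  have hbsupp : b.support ⊆ a.support := Finsupp.support_onFinset_subset
  have h := hc.1 b
  rw [Finsupp.sum_of_support_subset b hbsupp _ (fun i _ => by simp)] at h
  have h2 : ∀ n ∈ a.support,
      (b.sum fun m bm => conj (b n) * c n m * bm)
        = ∑ m ∈ a.support, conj (b n) * c n m * b m :=
    fun n _ => Finsupp.sum_of_support_subset b hbsupp _ (fun i _ => by simp)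
  rw [Finset.sum_congr rfl h2] at h
  refine le_of_le_of_eq h ?_
  rw [phaseDensity_eq_sum]
  refine Finset.sum_congr rfl fun n _ => Finset.sum_congr rfl fun m _ => ?_
  rw [hbval, hbval]
  have hexp : Complex.exp (Complex.I * ((n : ℂ) - (m : ℂ)) * (θ : ℂ))
      = Complex.exp (Complex.I * (n : ℂ) * (θ : ℂ))
        * Complex.exp (-(Complex.I * (m : ℂ) * (θ : ℂ))) := by
    rw [← Complex.exp_add]
    congr 1
    ring
  have hconj : conj (Complex.exp (-(Complex.I * (n : ℂ) * (θ : ℂ))))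
      = Complex.exp (Complex.I * (n : ℂ) * (θ : ℂ)) := by
    rw [← Complex.exp_conj]
    congr 1
    simp [Complex.conj_ofReal]
  rw [map_mul, hconj, hexp]
  ring

/-- The phase density is a real-analytic function of `θ`. -/
lemma phaseDensity_analytic (c : ℕ → ℕ → ℂ) (a : ℕ →₀ ℂ) :
    AnalyticOnNhd ℝ (phaseDensity c a) Set.univ := by
  have hrw : phaseDensity c a = fun θ : ℝ => ∑ n ∈ a.support, ∑ m ∈ a.support,
      c n m * Complex.exp (Complex.I * ((n : ℂ) - (m : ℂ)) * (θ : ℂ)) * conj (a n) * a m :=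
    rfl
  rw [hrw]
  apply Finset.analyticOnNhd_fun_sum
  intro n _
  apply Finset.analyticOnNhd_fun_sum
  intro m _
  have hor : AnalyticOnNhd ℝ (fun θ : ℝ => (θ : ℂ)) Set.univ :=
    Complex.ofRealCLM.analyticOnNhd _
  have h1 : AnalyticOnNhd ℝ
      (fun θ : ℝ => Complex.I * ((n : ℂ) - (m : ℂ)) * (θ : ℂ)) Set.univ :=
    analyticOnNhd_const.mul hor
  have h2 : AnalyticOnNhd ℝ
      (fun θ : ℝ => Complex.exp (Complex.I * ((n : ℂ) - (m : ℂ)) * (θ : ℂ))) Set.univ :=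
    fun x hx => (analyticAt_cexp.restrictScalars).comp (h1 x hx)
  exact ((analyticOnNhd_const.mul h2).mul analyticOnNhd_const).mul analyticOnNhd_const

/-- The basic Fourier orthogonality integral. -/
lemma exp_integral_eq (n m : ℕ) :
    (∫ x in (0:ℝ)..(2 * π), Complex.exp (Complex.I * ((n : ℂ) - (m : ℂ)) * (x : ℂ)))
      = if n = m then ((2 * π : ℝ) : ℂ) else 0 := by
  by_cases h : n = m
  · subst h
    simp
  · rw [if_neg h, integral_exp_mul_complex
      (mul_ne_zero Complex.I_ne_zero (sub_ne_zero.2 (by exact_mod_cast h)))]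
    have h1 : Complex.I * ((n : ℂ) - (m : ℂ)) * ((2 * π : ℝ) : ℂ)
        = (((n : ℤ) - (m : ℤ) : ℤ) : ℂ) * (2 * (π : ℂ) * Complex.I) := by
      push_cast
      ring
    rw [h1, Complex.exp_int_mul_two_pi_mul_I]
    simp

/-- Total integral of the phase density over one period. -/
lemma phaseDensity_total (c : ℕ → ℕ → ℂ) (hc : IsPhaseMatrix c) (a : ℕ →₀ ℂ)
    (ha : (a.sum fun _ x => ‖x‖ ^ 2) = 1) :
    ∫ θ in Ico 0 (2 * π), phaseDensity c a θ = ((2 * π : ℝ) : ℂ) := by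
  classical
  have h2π : (0:ℝ) ≤ 2 * π := by positivity
  have hintgrand : ∀ n m : ℕ, Continuous
      (fun θ : ℝ => c n m * Complex.exp (Complex.I * ((n : ℂ) - (m : ℂ)) * (θ : ℂ))
        * conj (a n) * a m) := by
    intro n m
    fun_prop
  rw [show (∫ θ in Ico 0 (2 * π), phaseDensity c a θ)
        = ∫ θ in (0:ℝ)..(2 * π), phaseDensity c a θ by
      rw [intervalIntegral.integral_of_le h2π, integral_Ico_eq_integral_Ioo,
        integral_Ioc_eq_integral_Ioo]]
  have hrw : ∀ θ : ℝ, phaseDensity c a θ = ∑ n ∈ a.support, ∑ m ∈ a.support,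
      c n m * Complex.exp (Complex.I * ((n : ℂ) - (m : ℂ)) * (θ : ℂ)) * conj (a n) * a m :=
    fun θ => rfl
  simp only [hrw]
  rw [intervalIntegral.integral_finset_sum (fun n _ =>
    ((continuous_finset_sum _ (fun m _ => hintgrand n m)).intervalIntegrable _ _))]
  have key : ∀ n ∈ a.support,
      (∫ x in (0:ℝ)..(2 * π), ∑ m ∈ a.support,
        c n m * Complex.exp (Complex.I * ((n : ℂ) - (m : ℂ)) * (x : ℂ)) * conj (a n) * a m)
      = ((2 * π : ℝ) : ℂ) * (conj (a n) * a n) := by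
    intro n hn
    rw [intervalIntegral.integral_finset_sum (fun m _ => (hintgrand n m).intervalIntegrable _ _)]
    have hterm : ∀ m ∈ a.support,
        (∫ x in (0:ℝ)..(2 * π),
          c n m * Complex.exp (Complex.I * ((n : ℂ) - (m : ℂ)) * (x : ℂ)) * conj (a n) * a m)
        = c n m * (if n = m then ((2 * π : ℝ) : ℂ) else 0) * conj (a n) * a m := by
      intro m _
      rw [← exp_integral_eq n m, intervalIntegral.integral_mul_const,
        intervalIntegral.integral_mul_const, intervalIntegral.integral_const_mul]
    rw [Finset.sum_congr rfl hterm, Finset.sum_eq_single n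
      (fun m _ hne => by simp [Ne.symm hne])
      (fun hn' => absurd hn hn')]
    rw [if_pos rfl, hc.2 n]
    ring
  rw [Finset.sum_congr rfl key, ← Finset.mul_sum]
  have hsum : ∑ n ∈ a.support, (conj (a n) * a n) = ((1 : ℝ) : ℂ) := by
    have : ∀ n ∈ a.support, conj (a n) * a n = ((‖a n‖ ^ 2 : ℝ) : ℂ) := by
      intro n _
      rw [mul_comm, Complex.mul_conj']
      norm_cast
    rw [Finset.sum_congr rfl this, ← Complex.ofReal_sum]
    exact_mod_cast congrArg (Complex.ofReal ·) ha
  rw [hsum]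
  simp

/-- **Nonlocalizability (Theorem 1) for states with finitely many excited number
states.**  Let `c` be a phase matrix, `a : ℕ → ℂ` finitely supported with
`∑_n |a_n|² = 1`, and `X ⊆ [0,2π)` a Borel set of Lebesgue measure strictly less
than `2π`.  Then `(2π)⁻¹ ∫_X ∑_{n,m} c_{n,m} e^{i(n-m)θ} conj(a_n) a_m dθ < 1`. -/
theorem phase_nonlocalizable_finite_state
    (c : ℕ → ℕ → ℂ) (hc : IsPhaseMatrix c)
    (a : ℕ →₀ ℂ) (ha : (a.sum fun _ x => ‖x‖ ^ 2) = 1)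
    (X : Set ℝ) (hXm : MeasurableSet X) (hXsub : X ⊆ Ico 0 (2 * π))
    (hXlt : volume X < ENNReal.ofReal (2 * π)) :
    ((1 / (2 * π) : ℝ) : ℂ) * ∫ θ in X, phaseDensity c a θ < 1 := by
  classical
  set f : ℝ → ℂ := phaseDensity c a with hf
  have hπ : (0:ℝ) < 2 * π := by positivity
  have hnonneg : ∀ θ, 0 ≤ f θ := phaseDensity_nonneg c hc a
  have hanal : AnalyticOnNhd ℝ f Set.univ := phaseDensity_analytic c a
  have hcont : Continuous f := by
    rw [← continuousOn_univ]
    exact fun x hx => ((hanal x hx).continuousAt).continuousWithinAt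
  have htotal : ∫ θ in Ico 0 (2 * π), f θ = ((2 * π : ℝ) : ℂ) :=
    phaseDensity_total c hc a ha
  set g : ℝ → ℝ := fun θ => (f θ).re with hg
  have hfg : f = fun θ => ((g θ : ℝ) : ℂ) := by
    funext θ
    have := Complex.le_def.1 (hnonneg θ)
    exact Complex.ext rfl (by simpa using this.2.symm)
  have hg0 : ∀ θ, 0 ≤ g θ := fun θ => (Complex.le_def.1 (hnonneg θ)).1
  -- integrability
  have hintIco : IntegrableOn f (Ico 0 (2 * π)) := by
    exact (hcont.integrableOn_Icc).mono_set Ico_subset_Icc_self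
  have hintX : IntegrableOn f X := hintIco.mono_set hXsub
  set Y : Set ℝ := Ico 0 (2 * π) \ X with hY
  have hYm : MeasurableSet Y := measurableSet_Ico.diff hXm
  have hintY : IntegrableOn f Y := hintIco.mono_set diff_subset
  have hsplit : ∫ θ in Y, f θ = ((2 * π : ℝ) : ℂ) - ∫ θ in X, f θ := by
    rw [hY, integral_diff hXm hintIco hXsub, htotal]
  -- real versions
  have hGX : ∫ θ in X, f θ = ((∫ θ in X, g θ : ℝ) : ℂ) := by
    rw [hfg]; exact integral_ofReal
  have hGY : ∫ θ in Y, f θ = ((∫ θ in Y, g θ : ℝ) : ℂ) := by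
    rw [hfg]; exact integral_ofReal
  have hgint : ∫ θ in Y, g θ = 2 * π - ∫ θ in X, g θ := by
    have h' : ((∫ θ in Y, g θ : ℝ) : ℂ) = ((2 * π - ∫ θ in X, g θ : ℝ) : ℂ) := by
      rw [← hGY, hsplit, hGX]
      push_cast
      ring
    exact_mod_cast h'
  have hgintX : IntegrableOn g X := by
    have := hintX.re
    simpa [hg, RCLike.re_to_complex, IntegrableOn] using this
  have hgintY : IntegrableOn g Y := by
    have := hintY.re
    simpa [hg, RCLike.re_to_complex, IntegrableOn] using this
  -- the integral over the complement Y is strictly positive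
  have hYpos : 0 < ∫ θ in Y, g θ := by
    rcases lt_or_eq_of_le (setIntegral_nonneg hYm (fun θ _ => hg0 θ)) with h | h
    · exact h
    exfalso
    -- g vanishes a.e. on Y
    have hae : g =ᵐ[volume.restrict Y] 0 :=
      (setIntegral_eq_zero_iff_of_nonneg_ae
        (Filter.Eventually.of_forall (fun θ => hg0 θ)) hgintY).1 h.symm
    have hNmeas : MeasurableSet {θ : ℝ | g θ ≠ 0} :=
      (measurableSet_eq_fun ((Complex.continuous_re.comp hcont).measurable) measurable_const).compl
    have hnull : volume ({θ : ℝ | g θ ≠ 0} ∩ Y) = 0 := by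
      have := hae
      rw [Filter.EventuallyEq, ae_iff] at this
      simpa [Measure.restrict_apply hNmeas] using this
    set Z : Set ℝ := Y \ {θ : ℝ | g θ ≠ 0} with hZ
    have hZvol : volume Z = volume Y := by
      rw [hZ, ← Set.diff_self_inter]
      exact measure_diff_null (by rwa [Set.inter_comm] at hnull)
    have hYvolpos : 0 < volume Y := by
      rcases eq_or_ne (volume Y) 0 with h0 | h0
      · exfalso
        have hle : volume (Ico (0:ℝ) (2 * π)) ≤ volume X + volume Y := by
          rw [hY]
          refine le_trans (measure_mono ?_) (measure_union_le X (Ico 0 (2*π) \ X))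
          intro x hx
          by_cases hxX : x ∈ X
          · exact Or.inl hxX
          · exact Or.inr ⟨hx, hxX⟩
        rw [h0, add_zero, Real.volume_Ico, sub_zero] at hle
        exact absurd (lt_of_le_of_lt hle hXlt) (lt_irrefl _)
      · exact h0.bot_lt
    have hZpos : 0 < volume Z := hZvol ▸ hYvolpos
    have hZinf : Z.Infinite := by
      intro hfin
      rw [hfin.countable.measure_zero volume] at hZpos
      exact lt_irrefl _ hZpos
    have hZsub : Z ⊆ Icc 0 (2 * π) :=
      fun x hx => Ico_subset_Icc_self (hx.1.1)
    obtain ⟨z0, _, hacc⟩ := hZinf.exists_accPt_of_subset_isCompact isCompact_Icc hZsub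
    have hfreq : ∃ᶠ y in nhdsWithin z0 {z0}ᶜ, f y = 0 := by
      rw [frequently_nhdsWithin_iff]
      refine (accPt_iff_frequently.1 hacc).mono ?_
      rintro y ⟨hyne, hyZ⟩
      refine ⟨?_, hyne⟩
      have hgy : g y = 0 := by
        by_contra hne
        exact hyZ.2 hne
      rw [hfg]
      simp [hgy]
    have hzero : ∀ θ : ℝ, f θ = 0 := by
      have := hanal.eqOn_zero_of_preconnected_of_frequently_eq_zero
        isPreconnected_univ (Set.mem_univ z0) hfreq
      exact fun θ => this (Set.mem_univ θ)
    have : ((2 * π : ℝ) : ℂ) = 0 := by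
      rw [← htotal]
      simp [hzero]
    exact absurd (by exact_mod_cast this) (ne_of_gt hπ)
  -- conclude
  have hXint_lt : ∫ θ in X, g θ < 2 * π := by linarith
  rw [hGX, show (1:ℂ) = ((1:ℝ):ℂ) by norm_num, ← Complex.ofReal_mul]
  rw [Complex.real_lt_real, one_div, inv_mul_eq_div]
  exact (div_lt_one hπ).2 hXint_lt
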